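/- Any f-frequent temporal graph on n ≥ 2 vertices with connected underlying graph admits, from any starting vertex, a temporal walk exploring it whose length is at most f(2n − 3), provided the lifetime is at least f(2n−3). Moreover the minimum-weight spanning tree of the frequency-weighted underlying graph has weight at most f(n − 1). -/

import Mathlib

/-- A temporal graph on vertex type `V`: timesteps `1, …, T`, with `active t e`
meaning the undirected edge `e` is active at timestep `t`. -/
structure TemporalGraph (V : Type) where
  T : ℕ
  active : ℕ → Sym2 V → Prop

namespace TemporalGraph

variable {V : Type}

/-- Edge `e` has frequency at most `f`: it is active at least once in every
window of `f` consecutive timesteps within `[1, T]`. -/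
def FreqLE (G : TemporalGraph V) (e : Sym2 V) (f : ℕ) : Prop :=
  0 < f ∧ ∀ t, 1 ≤ t → t + f ≤ G.T + 1 → ∃ s ∈ Finset.Ico t (t + f), G.active s e

/-- The frequency of an edge: the least `f` such that `e` is active at least
once in every `f` consecutive timesteps. -/
noncomputable def freq (G : TemporalGraph V) (e : Sym2 V) : ℕ :=
  sInf {f | G.FreqLE e f}

/-- Edge `e` is `r`-regular. -/
def Regular (G : TemporalGraph V) (e : Sym2 V) (r : ℕ) : Prop :=
  0 < r ∧ ∀ t, r + 1 ≤ t → t + r ≤ G.T →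
    ((G.active (t - r) e ↔ G.active t e) ∧ (G.active t e ↔ G.active (t + r) e))

/-- The underlying (static) graph of a temporal graph. -/
def underlying (G : TemporalGraph V) : SimpleGraph V where
  Adj u v := u ≠ v ∧ ∃ t ∈ Finset.Icc 1 G.T, G.active t s(u, v)
  symm := by
    constructor
    intro u v h
    refine ⟨h.1.symm, ?_⟩
    rw [Sym2.eq_swap]
    exact h.2
  loopless := ⟨fun v h => h.1 rfl⟩

/-- A temporal walk starting at `start`, given by vertices `vs 0, …, vs m` and
strictly increasing timesteps `ts 0 < … < ts (m-1)`, each step using an edge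
active at its timestep. -/
structure TWalk (G : TemporalGraph V) (start : V) where
  m : ℕ
  vs : Fin (m + 1) → V
  ts : Fin m → ℕ
  start_eq : vs 0 = start
  mono : StrictMono ts
  time_ge : ∀ i, 1 ≤ ts i
  time_le : ∀ i, ts i ≤ G.T
  steps : ∀ i : Fin m, G.active (ts i) s(vs i.castSucc, vs i.succ)

/-- A temporal walk explores the graph if every vertex is visited. -/
def TWalk.Explores {G : TemporalGraph V} {start : V} (w : G.TWalk start) : Prop :=
  Function.Surjective w.vs

/-- The length of a temporal walk: its final timestep. -/
def TWalk.length {G : TemporalGraph V} {start : V} (w : G.TWalk start) : ℕ :=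
  Finset.univ.sup w.ts

end TemporalGraph

section Helpers
open SimpleGraph


lemma reach_del {W : Type} {H : SimpleGraph W} {v w : W}
    (hvw : (H \ SimpleGraph.fromEdgeSet {s(v,w)}).Reachable v w) :
    ∀ {x y : W}, H.Reachable x y → (H \ SimpleGraph.fromEdgeSet {s(v,w)}).Reachable x y := by
  rintro x y ⟨p⟩
  induction p with
  | nil => rfl
  | @cons a b c h q ih =>
    refine Reachable.trans ?_ ih
    by_cases he : s(a, b) = s(v, w)
    · rw [Sym2.eq_iff] at he
      rcases he with ⟨rfl, rfl⟩ | ⟨rfl, rfl⟩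
      · exact hvw
      · exact hvw.symm
    · exact Adj.reachable (by simp [sdiff_adj, fromEdgeSet_adj, h, he, h.ne])

lemma exists_spanning_tree {W : Type} [Finite W] :
    ∀ (k : ℕ) (H : SimpleGraph W), H.edgeSet.ncard ≤ k → H.Connected →
      ∃ T ≤ H, T.IsTree := by
  intro k
  induction k with
  | zero =>
    intro H hcard hconn
    have hH : H = ⊥ := by
      rw [← edgeSet_eq_empty]
      exact Set.ncard_eq_zero (Set.toFinite _) |>.mp (Nat.le_zero.mp hcard)
    exact ⟨H, le_refl _, hconn, hH ▸ isAcyclic_bot⟩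
  | succ k ih =>
    intro H hcard hconn
    by_cases hac : H.IsAcyclic
    · exact ⟨H, le_refl _, hconn, hac⟩
    · rw [isAcyclic_iff_forall_adj_isBridge] at hac
      push_neg at hac
      obtain ⟨v, w, hadj, hbr⟩ := hac
      rw [isBridge_iff] at hbr
      push_neg at hbr
      have hvw : (H \ SimpleGraph.fromEdgeSet {s(v, w)}).Reachable v w := hbr
      set H' := H \ SimpleGraph.fromEdgeSet {s(v, w)} with hH'
      have hE : H'.edgeSet = H.edgeSet \ {s(v, w)} := by
        simp [hH']
      have hconn' : H'.Connected := by
        haveI := hconn.nonempty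
        exact Connected.mk fun x y => reach_del hvw (hconn.preconnected x y)
      have hlt : H'.edgeSet.ncard < H.edgeSet.ncard := by
        rw [hE]
        exact Set.ncard_diff_singleton_lt_of_mem ((H.mem_edgeSet).mpr hadj) (Set.toFinite _)
      obtain ⟨T, hT, hTt⟩ := ih H' (by omega) hconn'
      exact ⟨T, hT.trans (sdiff_le), hTt⟩



lemma reach_induce {W : Type} {G : SimpleGraph W} {s : Set W} :
    ∀ {a b : W} (p : G.Walk a b), (∀ x ∈ p.support, x ∈ s) →
      ∀ (ha : a ∈ s) (hb : b ∈ s), (G.induce s).Reachable ⟨a, ha⟩ ⟨b, hb⟩ := by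
  intro a b p
  induction p with
  | nil => intro _ ha hb; rfl
  | @cons a c b h q ih =>
    intro hp ha hb
    have hc : c ∈ s := hp c (by simp)
    refine Reachable.trans ?_ (ih (fun x hx => hp x (by simp [hx])) hc hb)
    exact Adj.reachable (by simpa using h)

/-- the hom from the induced graph back into `G`. -/
def induceHomVal {W : Type} (G : SimpleGraph W) (s : Set W) : G.induce s →g G :=
  ⟨Subtype.val, fun h => by simpa using h⟩

lemma cover_walk :
    ∀ (k : ℕ) (W : Type) (G : SimpleGraph W) [Fintype W], G.Connected → Fintype.card W ≤ k →
      ∀ v : W, ∃ p : G.Walk v v, (∀ x : W, x ∈ p.support) ∧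
        p.length + 2 ≤ 2 * Fintype.card W := by
  intro k
  induction k with
  | zero =>
    intro W G _ hconn hk v
    exact absurd (Fintype.card_pos_iff.mpr ⟨v⟩) (by omega)
  | succ k ih =>
    intro W G _ hconn hk v
    classical
    by_cases hcard : Fintype.card W ≤ 1
    · have hpos : 0 < Fintype.card W := Fintype.card_pos_iff.mpr ⟨v⟩
      refine ⟨SimpleGraph.Walk.nil, fun x => ?_, by
        simp only [SimpleGraph.Walk.length_nil]; omega⟩
      have : x = v := Fintype.card_le_one_iff.mp hcard x v
      simp [this]
    · push_neg at hcard
      -- find a vertex at maximal distance from v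
      obtain ⟨u, -, hu⟩ := Finset.exists_max_image Finset.univ (G.dist v)
        ⟨v, Finset.mem_univ v⟩
      obtain ⟨x, hxv⟩ := Fintype.exists_ne_of_one_lt_card hcard v
      have hdx : 0 < G.dist v x := hconn.pos_dist_of_ne (Ne.symm hxv)
      have hdu : 0 < G.dist v u := lt_of_lt_of_le hdx (hu x (Finset.mem_univ x))
      have huv : u ≠ v := by
        intro h; rw [h] at hdu; simp [SimpleGraph.dist_self] at hdu
      set s : Set W := {u}ᶜ with hs
      have hvs : v ∈ s := by simp [hs, huv.symm]
      -- any vertex other than u reaches v by a geodesic avoiding u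
      have key : ∀ (w : W) (hw : w ∈ s),
          (G.induce s).Reachable ⟨w, hw⟩ ⟨v, hvs⟩ := by
        intro w hw
        obtain ⟨p, hp⟩ := hconn.exists_walk_length_eq_dist v w
        have hup : u ∉ p.support := by
          intro hup
          have hsplit := SimpleGraph.Walk.take_spec p hup
          have h1 : G.dist v u ≤ (p.takeUntil u hup).length :=
            SimpleGraph.dist_le _
          have h2 : 1 ≤ (p.dropUntil u hup).length := by
            by_contra h
            push_neg at h
            have : u = w := SimpleGraph.Walk.eq_of_length_eq_zero (Nat.lt_one_iff.mp h)
            exact hw (by simp [hs, this.symm])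
          have h3 : (p.takeUntil u hup).length + (p.dropUntil u hup).length
              = p.length := by
            rw [← SimpleGraph.Walk.length_append, hsplit]
          have h4 : G.dist v w ≤ G.dist v u := hu w (Finset.mem_univ w)
          rw [hp] at h3
          omega
        exact (reach_induce p (fun y hy => by
          simp only [hs, Set.mem_compl_iff, Set.mem_singleton_iff]
          rintro rfl
          exact hup hy) hvs hw).symm
      have hconn' : (G.induce s).Connected := by
        haveI : Nonempty s := ⟨⟨v, hvs⟩⟩
        refine Connected.mk fun x y => ?_
        exact (key x.1 x.2).trans (key y.1 y.2).symm
      have hcards : Fintype.card s + 1 = Fintype.card W := by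
        have h5 : Fintype.card ↥({u}ᶜ : Set W)
            = Fintype.card W - Fintype.card ↥({u} : Set W) :=
          Fintype.card_compl_set _
        rw [Set.card_singleton] at h5
        show Fintype.card ↥({u}ᶜ : Set W) + 1 = Fintype.card W
        omega
      obtain ⟨q', hq'cov, hq'len⟩ := ih s (G.induce s) hconn'
        (by omega) ⟨v, hvs⟩
      set q : G.Walk v v := q'.map (induceHomVal G s) with hq
      have hqcov : ∀ x ∈ s, x ∈ q.support := by
        intro x hx
        show x ∈ (q'.map (induceHomVal G s)).support
        rw [SimpleGraph.Walk.support_map]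
        exact List.mem_map.mpr ⟨⟨x, hx⟩, hq'cov _, rfl⟩
      have hqlen : q.length = q'.length := SimpleGraph.Walk.length_map _ _
      -- find a neighbor of u
      obtain ⟨r⟩ := hconn.preconnected u v
      have hrlen : 0 < r.length := by
        by_contra h
        push_neg at h
        exact huv (SimpleGraph.Walk.eq_of_length_eq_zero (p := r) (by omega))
      have hadj : G.Adj u (r.getVert 1) := by
        have := r.adj_getVert_succ hrlen
        simpa using this
      set w : W := r.getVert 1 with hwdef
      have hws : w ∈ s := by simp [hs, hadj.ne']
      have hwq : w ∈ q.support := hqcov w hws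
      refine ⟨(q.takeUntil w hwq).append
        (SimpleGraph.Walk.cons hadj.symm (SimpleGraph.Walk.cons hadj
          (q.dropUntil w hwq))), ?_, ?_⟩
      · intro x
        rw [SimpleGraph.Walk.mem_support_append_iff]
        by_cases hxu : x = u
        · right; simp [hxu]
        · have hxq : x ∈ q.support := hqcov x (by simp [hs, hxu])
          rw [← SimpleGraph.Walk.take_spec q hwq,
            SimpleGraph.Walk.mem_support_append_iff] at hxq
          rcases hxq with h | h
          · left; exact h
          · right
            simp only [SimpleGraph.Walk.support_cons, List.mem_cons]
            exact Or.inr (Or.inr h)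
      · have h3 : (q.takeUntil w hwq).length + (q.dropUntil w hwq).length
            = q.length := by
          rw [← SimpleGraph.Walk.length_append, SimpleGraph.Walk.take_spec]
        simp only [SimpleGraph.Walk.length_append, SimpleGraph.Walk.length_cons]
        omega

end Helpers

/-- any `f`-frequent temporal graph on `n ≥ 2` vertices with
connected underlying graph and lifetime at least `f(2n-3)` can be explored from
any starting vertex in at most `f(2n - 3)` timesteps; moreover the
frequency-weighted underlying graph has a spanning tree of weight at most
`f(n - 1)` (hence so does the minimum-weight spanning tree). -/
theorem explore_f_frequent {V : Type} [Fintype V] (G : TemporalGraph V) (f n : ℕ)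
    (hn : n = Fintype.card V) (h2 : 2 ≤ n)
    (hconn : G.underlying.Connected)
    (hf : ∀ u v : V, G.underlying.Adj u v → G.FreqLE s(u, v) f)
    (hT : f * (2 * n - 3) ≤ G.T) :
    (∀ v : V, ∃ w : G.TWalk v, w.Explores ∧ w.length ≤ f * (2 * n - 3)) ∧
    (∃ T' : SimpleGraph V, T' ≤ G.underlying ∧ T'.IsTree ∧
      (∑ᶠ e ∈ T'.edgeSet, G.freq e) ≤ f * (n - 1)) := by
  classical
  constructor
  · intro v
    obtain ⟨p, hcov, hlen⟩ := cover_walk (Fintype.card V) V G.underlying hconn le_rfl v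
    have hL : 1 ≤ p.length := by
      by_contra h
      push_neg at h
      obtain ⟨x, hxv⟩ := Fintype.exists_ne_of_one_lt_card (by omega : 1 < Fintype.card V) v
      obtain ⟨j, hj1, hj2⟩ := SimpleGraph.Walk.mem_support_iff_exists_getVert.mp (hcov x)
      have : j = 0 := by omega
      subst this
      rw [SimpleGraph.Walk.getVert_zero] at hj1
      exact hxv hj1.symm
    set m := p.length - 1 with hm
    have hm1 : m + 1 = p.length := by omega
    have hmle : m ≤ 2 * n - 3 := by omega
    have hadj : ∀ i : Fin m, G.underlying.Adj (p.getVert i) (p.getVert (i + 1)) :=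
      fun i => p.adj_getVert_succ (by omega)
    have key : ∀ i : Fin m, ∃ s, ((i : ℕ) * f + 1 ≤ s ∧ s ≤ ((i : ℕ) + 1) * f) ∧
        G.active s s(p.getVert i, p.getVert (i + 1)) := by
      intro i
      obtain ⟨hfpos, hw⟩ := hf _ _ (hadj i)
      have hi1 : (i : ℕ) + 1 ≤ 2 * n - 3 := by have := i.isLt; omega
      have hTi : (i : ℕ) * f + 1 + f ≤ G.T + 1 := by
        have : ((i : ℕ) + 1) * f ≤ (2 * n - 3) * f :=
          Nat.mul_le_mul_right f hi1
        have h2 : (2 * n - 3) * f ≤ G.T := by rw [mul_comm]; exact hT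
        calc (i : ℕ) * f + 1 + f = ((i : ℕ) + 1) * f + 1 := by ring
        _ ≤ G.T + 1 := by omega
      obtain ⟨s, hs1, hs2⟩ := hw ((i : ℕ) * f + 1) (by omega) hTi
      rw [Finset.mem_Ico] at hs1
      exact ⟨s, ⟨hs1.1, by have := hs1.2; nlinarith [hs1.2]⟩, hs2⟩
    choose ts h12 h3 using key
    have h1 : ∀ i : Fin m, (i : ℕ) * f + 1 ≤ ts i := fun i => (h12 i).1
    have h2 : ∀ i : Fin m, ts i ≤ ((i : ℕ) + 1) * f := fun i => (h12 i).2
    have hup : ∀ i : Fin m, ts i ≤ f * (2 * n - 3) := by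
      intro i
      have hi1 : (i : ℕ) + 1 ≤ 2 * n - 3 := by have := i.isLt; omega
      calc ts i ≤ ((i : ℕ) + 1) * f := h2 i
      _ ≤ (2 * n - 3) * f := Nat.mul_le_mul_right f hi1
      _ = f * (2 * n - 3) := mul_comm _ _
    refine ⟨⟨m, fun i => p.getVert i, ts, ?_, ?_, ?_, ?_, ?_⟩, ?_, ?_⟩
    · simp
    · intro i j hij
      have hij' : (i : ℕ) < (j : ℕ) := hij
      calc ts i ≤ ((i : ℕ) + 1) * f := h2 i
      _ ≤ (j : ℕ) * f := Nat.mul_le_mul_right f (by omega)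
      _ < ts j := by have := h1 j; omega
    · intro i
      have := h1 i; omega
    · intro i
      exact le_trans (hup i) hT
    · intro i
      have := h3 i
      simpa using this
    · intro x
      obtain ⟨j, hj1, hj2⟩ := SimpleGraph.Walk.mem_support_iff_exists_getVert.mp (hcov x)
      by_cases hjm : j ≤ m
      · exact ⟨⟨j, by show j < m + 1; omega⟩, hj1⟩
      · refine ⟨0, ?_⟩
        have hj : j = p.length := by omega
        have : x = v := by
          rw [← hj1, hj, SimpleGraph.Walk.getVert_length]
        simp [this]
    · exact Finset.sup_le fun i _ => hup i
  · obtain ⟨T', hle, hTt⟩ := exists_spanning_tree (G.underlying.edgeSet.ncard)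
      G.underlying le_rfl hconn
    refine ⟨T', hle, hTt, ?_⟩
    haveI : Fintype T'.edgeSet := (Set.toFinite _).fintype
    have hcoe : T'.edgeSet = ↑T'.edgeFinset := (SimpleGraph.coe_edgeFinset _).symm
    rw [hcoe, finsum_mem_coe_finset]
    have hbound : ∀ e ∈ T'.edgeFinset, G.freq e ≤ f := by
      intro e he
      rw [SimpleGraph.mem_edgeFinset] at he
      induction e with
      | h u w =>
        have hadj : G.underlying.Adj u w :=
          (G.underlying.mem_edgeSet).mp (SimpleGraph.edgeSet_mono hle he)
        exact Nat.sInf_le (hf u w hadj)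
    calc ∑ e ∈ T'.edgeFinset, G.freq e ≤ T'.edgeFinset.card • f :=
        Finset.sum_le_card_nsmul _ _ f hbound
    _ = T'.edgeFinset.card * f := by rw [smul_eq_mul]
    _ = (n - 1) * f := by
        have hc := hTt.card_edgeFinset
        have : T'.edgeFinset.card = n - 1 := by omega
        rw [this]
    _ = f * (n - 1) := mul_comm _ _
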